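/- Let a, n be positive integers with 1 ≤ a < n and gcd(a,n) = 1. Then, as an identity of real numbers, V(a,n) + 1 = (n/a)·Σ_{s=1}^{a} φ(s)/s + Σ_{s=1}^{a} Σ_{d | s} μ(d)·( ⟨(s−1)·n/(a·d)⟩ − ⟨s·n/(a·d)⟩ ), where the inner sum is over the positive divisors d of s. -/

import Mathlib

/-- `(x, y) ∈ ℤ²` lies in the interior of the lattice parallelogram
`P_{a,n} = {t₁·(1,0) + t₂·(a,n) : 0 ≤ t₁, t₂ ≤ 1}`. -/
def inInteriorP (a n : ℤ) (p : ℤ × ℤ) : Prop :=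
  ∃ t₁ t₂ : ℝ, 0 < t₁ ∧ t₁ < 1 ∧ 0 < t₂ ∧ t₂ < 1 ∧
    (p.1 : ℝ) = t₁ + t₂ * (a : ℝ) ∧ (p.2 : ℝ) = t₂ * (n : ℝ)

/-- A lattice point `(x, y) ∈ ℤ²` is visible (from the origin) if `gcd(x, y) = 1`. -/
def VisiblePt (p : ℤ × ℤ) : Prop := Int.gcd p.1 p.2 = 1

/-- `V a n` is the number of visible lattice points in the interior of `P_{a,n}`. -/
noncomputable def V (a n : ℤ) : ℕ :=
  {p : ℤ × ℤ | inInteriorP a n p ∧ VisiblePt p}.ncard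


lemma floor_cast_div (m : ℤ) (k : ℕ) : ⌊(m:ℝ)/(k:ℝ)⌋ = m / k := by
  have h : ((m:ℝ)/(k:ℝ)) = (((m:ℚ)/(k:ℚ) : ℚ) : ℝ) := by push_cast; ring
  rw [h, Rat.floor_cast, Rat.floor_intCast_div_natCast]

lemma ediv_ediv' {a d : ℤ} (ha : 0 < a) (hd : 0 < d) (m : ℤ) : m / a / d = m / (a * d) := by
  have h : ∀ x : ℤ, x ≤ m / a / d ↔ x ≤ m / (a * d) := fun x => by
    rw [Int.le_ediv_iff_mul_le hd, Int.le_ediv_iff_mul_le ha,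
      Int.le_ediv_iff_mul_le (mul_pos ha hd), mul_assoc, mul_comm d a]
  exact le_antisymm ((h _).1 le_rfl) ((h _).2 le_rfl)

lemma sub_one_ediv {c : ℤ} (hc : 0 < c) (m : ℤ) :
    (m - 1) / c = m / c - (if c ∣ m then 1 else 0) := by
  rcases eq_or_ne (m % c) 0 with h | h
  · have hd : c ∣ m := Int.dvd_of_emod_eq_zero h
    simp only [if_pos hd]
    obtain ⟨k, rfl⟩ := hd
    rw [Int.mul_ediv_cancel_left _ hc.ne']
    have h2 : c * k - 1 = (c - 1) + (k - 1) * c := by ring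
    rw [h2, Int.add_mul_ediv_right _ _ hc.ne',
      Int.ediv_eq_zero_of_lt (by omega) (by omega)]
    ring
  · have hd : ¬ c ∣ m := by
      intro hh; exact h (Int.emod_eq_zero_of_dvd hh)
    simp only [if_neg hd, sub_zero]
    have h1 : 0 ≤ m % c := Int.emod_nonneg m hc.ne'
    have h2 : m % c < c := Int.emod_lt_of_pos m hc
    have h3 : m - 1 = (m % c - 1) + (m / c) * c := by
      have h4 := Int.mul_ediv_add_emod m c
      have h5 : c * (m / c) = (m / c) * c := mul_comm _ _
      linarith
    rw [h3, Int.add_mul_ediv_right _ _ hc.ne',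
      Int.ediv_eq_zero_of_lt (by omega) (by omega), zero_add]

lemma sum_moebius_divisors (m : ℕ) :
    ∑ d ∈ m.divisors, ArithmeticFunction.moebius d = if m = 1 then 1 else 0 := by
  calc ∑ d ∈ m.divisors, ArithmeticFunction.moebius d
      = (ArithmeticFunction.moebius * ArithmeticFunction.zeta : ArithmeticFunction ℤ) m :=
        (ArithmeticFunction.coe_mul_zeta_apply).symm
    _ = (1 : ArithmeticFunction ℤ) m := by rw [ArithmeticFunction.moebius_mul_coe_zeta]
    _ = if m = 1 then 1 else 0 := ArithmeticFunction.one_apply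

lemma sum_moebius_mul_div (s : ℕ) (hs : 0 < s) :
    ∑ d ∈ s.divisors, ArithmeticFunction.moebius d * ((s / d : ℕ) : ℤ) = (Nat.totient s : ℤ) := by
  have key := (ArithmeticFunction.sum_eq_iff_sum_smul_moebius_eq
    (R := ℤ) (f := fun n => (Nat.totient n : ℤ)) (g := fun n => (n : ℤ))).1
    (fun n hn => by exact_mod_cast congrArg (Nat.cast : ℕ → ℤ) (Nat.sum_totient n)) s hs
  rw [← key, Nat.sum_divisorsAntidiagonal (f := fun x y => ArithmeticFunction.moebius x • (y : ℤ))]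
  simp [smul_eq_mul]

lemma inInteriorP_iff {a n : ℤ} (hn : 0 < n) (p : ℤ × ℤ) :
    inInteriorP a n p ↔
      0 < p.2 ∧ p.2 < n ∧ a * p.2 < p.1 * n ∧ (p.1 - 1) * n < a * p.2 := by
  have hn' : (0:ℝ) < (n:ℝ) := by exact_mod_cast hn
  constructor
  · rintro ⟨t₁, t₂, h1, h2, h3, h4, h5, h6⟩
    have r1 : (0:ℝ) < (p.2:ℝ) := by rw [h6]; positivity
    have r2 : (p.2:ℝ) < (n:ℝ) := by rw [h6]; nlinarith
    have r3 : (a:ℝ) * p.2 < (p.1:ℝ) * n := by rw [h5, h6]; nlinarith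
    have r4 : ((p.1:ℝ) - 1) * n < (a:ℝ) * p.2 := by rw [h5, h6]; nlinarith
    refine ⟨by exact_mod_cast r1, by exact_mod_cast r2, by exact_mod_cast r3, ?_⟩
    have : ((p.1 - 1 : ℤ) : ℝ) * n < (a:ℝ) * p.2 := by push_cast; push_cast at r4; linarith
    exact_mod_cast this
  · rintro ⟨h1, h2, h3, h4⟩
    have r1 : (0:ℝ) < (p.2:ℝ) := by exact_mod_cast h1
    have r2 : (p.2:ℝ) < (n:ℝ) := by exact_mod_cast h2
    have r3 : (a:ℝ) * p.2 < (p.1:ℝ) * n := by exact_mod_cast h3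
    have r4 : ((p.1:ℝ) - 1) * n < (a:ℝ) * p.2 := by
      have : ((p.1 - 1 : ℤ) : ℝ) * n < (a:ℝ) * p.2 := by exact_mod_cast h4
      push_cast at this; linarith
    refine ⟨(p.1:ℝ) - (a:ℝ) * p.2 / n, (p.2:ℝ) / n, ?_, ?_, by positivity,
      (div_lt_one hn').2 r2, by field_simp; ring, by field_simp⟩
    · have : (a:ℝ) * p.2 / n < p.1 := by rw [div_lt_iff₀ hn']; linarith
      linarith
    · have : (p.1:ℝ) - 1 < (a:ℝ) * p.2 / n := by rw [lt_div_iff₀ hn']; linarith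
      linarith

noncomputable def Ys (a n s : ℕ) : Finset ℤ :=
  (Finset.Ioc ((((s:ℤ) - 1) * n) / a) (((s:ℤ) * n - 1) / a)).filter
    (fun y => Int.gcd (s:ℤ) y = 1)

lemma V_eq_sum (a n : ℕ) (ha : 1 ≤ a) (han : a < n) :
    V a n = ∑ s ∈ Finset.Icc 1 a, (Ys a n s).card := by
  have ha' : (0:ℤ) < (a:ℤ) := by exact_mod_cast ha
  have hn0 : 0 < n := by omega
  have hn' : (0:ℤ) < (n:ℤ) := by exact_mod_cast hn0
  set S : Finset (ℤ × ℤ) :=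
    (Finset.Icc 1 a).biUnion (fun s => (Ys a n s).image fun y => ((s:ℤ), y)) with hS
  have hset : {p : ℤ × ℤ | inInteriorP a n p ∧ VisiblePt p} = ↑S := by
    ext p
    simp only [Set.mem_setOf_eq, hS, Finset.coe_biUnion, Set.mem_iUnion, Finset.mem_coe,
      Finset.mem_image, Finset.mem_Icc, Ys, Finset.mem_filter, Finset.mem_Ioc,
      inInteriorP_iff hn' p, VisiblePt]
    constructor
    · rintro ⟨⟨h1, h2, h3, h4⟩, hg⟩
      have hp1pos : 0 < p.1 := by nlinarith
      have hp1le : p.1 ≤ (a:ℤ) := by nlinarith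
      have hp1le' : p.1.toNat ≤ a := by omega
      refine ⟨p.1.toNat, ⟨by omega, hp1le'⟩, p.2, ⟨⟨?_, ?_⟩, ?_⟩, ?_⟩
      · rw [Int.toNat_of_nonneg hp1pos.le, Int.ediv_lt_iff_lt_mul ha']
        nlinarith
      · rw [Int.toNat_of_nonneg hp1pos.le, Int.le_ediv_iff_mul_le ha']
        nlinarith
      · rw [Int.toNat_of_nonneg hp1pos.le]; exact hg
      · rw [Int.toNat_of_nonneg hp1pos.le]
    · rintro ⟨s, ⟨hs1n, hs2n⟩, y, ⟨⟨hL, hR⟩, hg⟩, rfl⟩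
      have hs1 : (1:ℤ) ≤ (s:ℤ) := by exact_mod_cast hs1n
      have hsa : (s:ℤ) ≤ (a:ℤ) := by exact_mod_cast hs2n
      have hL' : ((s:ℤ) - 1) * n < y * a := (Int.ediv_lt_iff_lt_mul ha').1 hL
      have hR' : y * a ≤ (s:ℤ) * n - 1 := (Int.le_ediv_iff_mul_le ha').1 hR
      have hLnn : (0:ℤ) ≤ (((s:ℤ) - 1) * n) / a :=
        Int.ediv_nonneg (by nlinarith) ha'.le
      refine ⟨⟨by omega, ?_, by nlinarith, by nlinarith⟩, hg⟩
      nlinarith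
  have hVS : V a n = S.card := by
    rw [V, hset, Set.ncard_coe_finset]
  rw [hVS, hS, Finset.card_biUnion]
  · exact Finset.sum_congr rfl fun s _ =>
      Finset.card_image_of_injective _ (fun y z h => (Prod.ext_iff.1 h).2)
  · intro s _ t _ hst
    simp only [Finset.disjoint_left, Finset.mem_image]
    rintro p ⟨y, _, rfl⟩ ⟨z, _, h⟩
    simp only [Prod.mk.injEq] at h
    exact hst (by exact_mod_cast h.1.symm)

lemma gcd_ite_eq_sum (s : ℕ) (hs : 1 ≤ s) (y : ℤ) :
    (if Int.gcd (s:ℤ) y = 1 then (1:ℤ) else 0) =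
      ∑ d ∈ s.divisors.filter (fun d : ℕ => (d:ℤ) ∣ y), ArithmeticFunction.moebius d := by
  have hg : Int.gcd (s:ℤ) y = Nat.gcd s y.natAbs := by
    rw [Int.gcd]; simp
  have hfil : (Nat.gcd s y.natAbs).divisors = s.divisors.filter (fun d : ℕ => (d:ℤ) ∣ y) := by
    ext d
    simp only [Nat.mem_divisors, Finset.mem_filter, Nat.dvd_gcd_iff, Int.natCast_dvd_natCast]
    constructor
    · rintro ⟨⟨h1, h2⟩, _⟩
      exact ⟨⟨h1, by omega⟩, Int.natCast_dvd.2 h2⟩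
    · rintro ⟨⟨h1, _⟩, h2⟩
      refine ⟨⟨h1, Int.natCast_dvd.1 h2⟩, Nat.gcd_ne_zero_left (by omega)⟩
  rw [hg, ← hfil, sum_moebius_divisors]

lemma card_Ys (a n s : ℕ) (ha : 1 ≤ a) (hn : 1 ≤ n) (hs : 1 ≤ s) :
    ((Ys a n s).card : ℤ) =
      ∑ d ∈ s.divisors, ArithmeticFunction.moebius d *
        ((((s:ℤ) * n - 1) / ((a:ℤ) * d)) - ((((s:ℤ) - 1) * n) / ((a:ℤ) * d))) := by
  have ha' : (0:ℤ) < (a:ℤ) := by exact_mod_cast ha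
  set L : ℤ := (((s:ℤ) - 1) * n) / a with hL
  set R : ℤ := ((s:ℤ) * n - 1) / a with hR
  have hLR : L ≤ R := by
    apply Int.ediv_le_ediv ha'
    have : (1:ℤ) ≤ n := by exact_mod_cast hn
    nlinarith
  have step1 : ((Ys a n s).card : ℤ) =
      ∑ y ∈ Finset.Ioc L R, (if Int.gcd (s:ℤ) y = 1 then (1:ℤ) else 0) := by
    rw [Ys, ← hL, ← hR]
    rw [Finset.card_filter]
    push_cast
    rfl
  rw [step1]
  have step2 : ∀ y ∈ Finset.Ioc L R,
      (if Int.gcd (s:ℤ) y = 1 then (1:ℤ) else 0) =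
        ∑ d ∈ s.divisors, if (d:ℤ) ∣ y then ArithmeticFunction.moebius d else 0 := by
    intro y _
    rw [gcd_ite_eq_sum s hs y, Finset.sum_filter]
  rw [Finset.sum_congr rfl step2, Finset.sum_comm]
  refine Finset.sum_congr rfl fun d hd => ?_
  have hd0 : 0 < d := Nat.pos_of_mem_divisors hd
  have hd' : (0:ℤ) < (d:ℤ) := by exact_mod_cast hd0
  rw [← Finset.sum_filter, Finset.sum_const, nsmul_eq_mul]
  have hcard : ((Finset.Ioc L R).filter (fun y => (d:ℤ) ∣ y)).card = (R / d - L / d).toNat := by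
    have key := Int.Ioc_filter_dvd_card L R hd'
    have h1 : ⌊(L : ℚ) / ((d:ℤ) : ℚ)⌋ = L / (d:ℤ) := by
      push_cast
      exact_mod_cast Rat.floor_intCast_div_natCast L d
    have h2 : ⌊(R : ℚ) / ((d:ℤ) : ℚ)⌋ = R / (d:ℤ) := by
      push_cast
      exact_mod_cast Rat.floor_intCast_div_natCast R d
    rw [h1, h2] at key
    exact_mod_cast key.trans (Int.toNat_eq_max _).symm
  rw [hcard]
  have hdivLR : L / (d:ℤ) ≤ R / (d:ℤ) := Int.ediv_le_ediv hd' hLR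
  rw [Int.toNat_of_nonneg (by omega)]
  rw [hL, hR, ediv_ediv' ha' hd', ediv_ediv' ha' hd']
  ring

lemma dvd_char {a n s d : ℕ} (ha : 1 ≤ a) (hgcd : Nat.gcd a n = 1)
    (hs1 : 1 ≤ s) (hs2 : s ≤ a) (hd : d ∣ s) (hd0 : 0 < d) :
    a * d ∣ s * n ↔ s = a ∧ d = 1 := by
  constructor
  · intro h
    have hco : Nat.Coprime a n := hgcd
    have has : a ∣ s := hco.dvd_of_dvd_mul_right ((dvd_mul_right a d).trans h)
    have hsa : s = a := Nat.le_antisymm hs2 (Nat.le_of_dvd (by omega) has)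
    subst hsa
    have hdn : d ∣ n := by
      rcases h with ⟨k, hk⟩
      refine ⟨k, Nat.eq_of_mul_eq_mul_left (show 0 < s by omega) ?_⟩
      rw [hk]; ring
    have hds : d ∣ s := hd
    have : d ∣ Nat.gcd s n := Nat.dvd_gcd hds hdn
    rw [hgcd] at this
    exact ⟨rfl, Nat.dvd_one.1 this⟩
  · rintro ⟨rfl, rfl⟩
    simpa using dvd_mul_right s n


lemma master (a n : ℕ) (ha : 1 ≤ a) (han : a < n) (hgcd : Nat.gcd a n = 1) :
    (V a n : ℤ) + 1 =
      ∑ s ∈ Finset.Icc 1 a, ∑ d ∈ s.divisors, ArithmeticFunction.moebius d *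
        (((s:ℤ) * n / ((a:ℤ) * d)) - ((((s:ℤ) - 1) * n) / ((a:ℤ) * d))) := by
  have hn : 1 ≤ n := by omega
  have hV : (V a n : ℤ) = ∑ s ∈ Finset.Icc 1 a, ((Ys a n s).card : ℤ) := by
    rw [V_eq_sum a n ha han]; push_cast; rfl
  rw [hV, Finset.sum_congr rfl (fun s hs => card_Ys a n s ha hn
    (Finset.mem_Icc.1 hs).1)]
  have key : ∀ s ∈ Finset.Icc 1 a, ∀ d ∈ s.divisors,
      ArithmeticFunction.moebius d *
        ((((s:ℤ) * n - 1) / ((a:ℤ) * d)) - ((((s:ℤ) - 1) * n) / ((a:ℤ) * d))) =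
      ArithmeticFunction.moebius d *
        (((s:ℤ) * n / ((a:ℤ) * d)) - ((((s:ℤ) - 1) * n) / ((a:ℤ) * d)))
        - (if s = a ∧ d = 1 then 1 else 0) := by
    intro s hs d hd
    rw [Finset.mem_Icc] at hs
    have hd' := Nat.mem_divisors.1 hd
    have hd0 : 0 < d := Nat.pos_of_mem_divisors hd
    have had : (0:ℤ) < (a:ℤ) * d := by positivity
    rw [sub_one_ediv had ((s:ℤ) * n)]
    have hiff : ((a:ℤ) * d ∣ (s:ℤ) * n) ↔ (s = a ∧ d = 1) := by
      rw [show (a:ℤ) * d = ((a*d : ℕ) : ℤ) by push_cast; ring,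
        show (s:ℤ) * n = ((s*n : ℕ) : ℤ) by push_cast; ring,
        Int.natCast_dvd_natCast]
      exact dvd_char ha hgcd hs.1 hs.2 hd'.1 hd0
    by_cases hc : s = a ∧ d = 1
    · rw [if_pos ((hiff).2 hc), if_pos hc, hc.2]
      simp [ArithmeticFunction.moebius_apply_one]
      ring
    · rw [if_neg (fun h => hc (hiff.1 h)), if_neg hc]
      ring
  rw [Finset.sum_congr rfl (fun s hs => Finset.sum_congr rfl (key s hs))]
  rw [Finset.sum_congr rfl (fun s _ => Finset.sum_sub_distrib _ _)]
  rw [Finset.sum_sub_distrib]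
  have hind : ∑ s ∈ Finset.Icc 1 a, ∑ d ∈ s.divisors,
      (if s = a ∧ d = 1 then (1:ℤ) else 0) = 1 := by
    have h1 : ∀ s ∈ Finset.Icc 1 a, ∑ d ∈ s.divisors,
        (if s = a ∧ d = 1 then (1:ℤ) else 0) = if s = a then 1 else 0 := by
      intro s hs
      rw [Finset.mem_Icc] at hs
      by_cases hsa : s = a
      · subst hsa
        simp only [true_and]
        rw [Finset.sum_ite_eq' s.divisors 1 (fun _ => (1:ℤ))]
        simp [Nat.one_mem_divisors, show s ≠ 0 by omega]
      · simp [hsa]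
    rw [Finset.sum_congr rfl h1, Finset.sum_ite_eq' (Finset.Icc 1 a) a (fun _ => (1:ℤ))]
    simp [Finset.mem_Icc, ha]
  rw [hind]
  ring

open ArithmeticFunction ArithmeticFunction.Moebius in
lemma real_inner (a n s : ℕ) (ha : 1 ≤ a) (hn : 1 ≤ n) (hs1 : 1 ≤ s) :
    ∑ d ∈ s.divisors, (μ d : ℝ) *
        (Int.fract (((s : ℝ) - 1) * n / (a * d)) - Int.fract ((s : ℝ) * n / (a * d))) =
      ((∑ d ∈ s.divisors, μ d *
        (((s:ℤ) * n / ((a:ℤ) * d)) - ((((s:ℤ) - 1) * n) / ((a:ℤ) * d))) : ℤ) : ℝ)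
        - (n : ℝ) / a * ((Nat.totient s : ℝ) / s) := by
  have ha' : (0:ℝ) < (a:ℝ) := by exact_mod_cast ha
  have hs' : (0:ℝ) < (s:ℝ) := by exact_mod_cast hs1
  have step : ∀ d ∈ s.divisors, (μ d : ℝ) *
      (Int.fract (((s : ℝ) - 1) * n / (a * d)) - Int.fract ((s : ℝ) * n / (a * d))) =
      ((μ d * (((s:ℤ) * n / ((a:ℤ) * d)) - ((((s:ℤ) - 1) * n) / ((a:ℤ) * d))) : ℤ) : ℝ)
      - (μ d : ℝ) * ((n:ℝ) / ((a:ℝ) * d)) := by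
    intro d hd
    have hd0 : 0 < d := Nat.pos_of_mem_divisors hd
    have hd' : (0:ℝ) < (d:ℝ) := by exact_mod_cast hd0
    have h0 : ⌊((s : ℝ) - 1) * n / (a * d)⌋ = (((s:ℤ) - 1) * n) / ((a:ℤ) * d) := by
      have e1 : ((s : ℝ) - 1) * n / (a * d) = (((((s:ℤ) - 1) * n) : ℤ) : ℝ) / ((a * d : ℕ) : ℝ) := by
        push_cast; ring
      rw [e1, floor_cast_div]
      norm_cast
    have h1 : ⌊(s : ℝ) * n / (a * d)⌋ = ((s:ℤ) * n) / ((a:ℤ) * d) := by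
      have e1 : (s : ℝ) * n / (a * d) = ((((s:ℤ) * n) : ℤ) : ℝ) / ((a * d : ℕ) : ℝ) := by
        push_cast; ring
      rw [e1, floor_cast_div]
      norm_cast
    rw [← Int.self_sub_floor, ← Int.self_sub_floor, h0, h1]
    have e2 : ((s : ℝ) - 1) * n / (a * d) - (s : ℝ) * n / (a * d) = -((n:ℝ) / (a * d)) := by
      field_simp
      ring
    push_cast
    linear_combination ((μ d : ℤ) : ℝ) * e2
  rw [Finset.sum_congr rfl step, Finset.sum_sub_distrib]
  push_cast
  congr 1
  have htot' := congrArg (Int.cast : ℤ → ℝ) (sum_moebius_mul_div s hs1)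
  push_cast at htot'
  have htot : ∑ d ∈ s.divisors, ((μ d : ℤ) : ℝ) * ((s / d : ℕ) : ℝ) = (Nat.totient s : ℝ) := htot'
  have step2 : ∀ d ∈ s.divisors, (μ d : ℝ) * ((n:ℝ) / ((a:ℝ) * d)) =
      ((n:ℝ) / ((a:ℝ) * s)) * (((μ d : ℤ) : ℝ) * ((s / d : ℕ) : ℝ)) := by
    intro d hd
    have hd0 : 0 < d := Nat.pos_of_mem_divisors hd
    have hd' : (0:ℝ) < (d:ℝ) := by exact_mod_cast hd0
    have hdvd : (d:ℕ) ∣ s := (Nat.mem_divisors.1 hd).1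
    have hcast : ((s / d : ℕ) : ℝ) = (s:ℝ) / d := by
      rw [Nat.cast_div hdvd hd'.ne']
    rw [hcast]
    field_simp
  rw [Finset.sum_congr rfl step2, ← Finset.mul_sum, htot]
  field_simp

open ArithmeticFunction ArithmeticFunction.Moebius in
/-- `V(a,n) + 1 = (n/a)·Σ_{s=1}^{a} φ(s)/s
  + Σ_{s=1}^{a} Σ_{d ∣ s} μ(d)·(⟨(s−1)n/(ad)⟩ − ⟨sn/(ad)⟩)`,
as an identity of real numbers, where `⟨·⟩` is the fractional part. -/
theorem V_formula (a n : ℕ) (ha : 1 ≤ a) (han : a < n) (hgcd : Nat.gcd a n = 1) :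
    (V a n : ℝ) + 1 =
      (n : ℝ) / (a : ℝ) * ∑ s ∈ Finset.Icc 1 a, (Nat.totient s : ℝ) / (s : ℝ) +
        ∑ s ∈ Finset.Icc 1 a, ∑ d ∈ Nat.divisors s,
          (μ d : ℝ) *
            (Int.fract (((s : ℝ) - 1) * n / (a * d)) -
              Int.fract ((s : ℝ) * n / (a * d))) := by
  have hn : 1 ≤ n := by omega
  have hinner : ∀ s ∈ Finset.Icc 1 a,
      ∑ d ∈ Nat.divisors s, (μ d : ℝ) *
        (Int.fract (((s : ℝ) - 1) * n / (a * d)) - Int.fract ((s : ℝ) * n / (a * d))) =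
      ((∑ d ∈ s.divisors, μ d *
        (((s:ℤ) * n / ((a:ℤ) * d)) - ((((s:ℤ) - 1) * n) / ((a:ℤ) * d))) : ℤ) : ℝ)
        - (n : ℝ) / a * ((Nat.totient s : ℝ) / s) := fun s hs =>
    real_inner a n s ha hn (Finset.mem_Icc.1 hs).1
  rw [Finset.sum_congr rfl hinner, Finset.sum_sub_distrib, ← Finset.mul_sum]
  have hmaster := congrArg (Int.cast : ℤ → ℝ) (master a n ha han hgcd)
  push_cast at hmaster ⊢
  linarith [hmaster]
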